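/- As n → ∞, σ_n 2^{n−1} · √(2πn/3) / 2ⁿ → 1; equivalently σ_n 2^{n−1} ~ 2ⁿ / √(2πn/3). -/

import Mathlib

open MeasureTheory

noncomputable def sigma (n : ℕ) : ℝ :=
  (2 / Real.pi) * ∫ t in Set.Ioi (0:ℝ), (Real.sin t / t) ^ n

open Filter Set

namespace SigmaAsymp

noncomputable def hh (t : ℝ) : ℝ := Real.sin t / t

lemma measurable_hh : Measurable hh :=
  Real.measurable_sin.div measurable_id

lemma sin_le_poly {t : ℝ} (h0 : 0 < t) (h1 : t ≤ 1) :
    Real.sin t ≤ t - t ^ 3 / 6 + t ^ 4 * (5 / 96) := by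
  have hb := Real.sin_bound (x := t) (by rw [abs_of_pos h0]; exact h1)
  rw [abs_of_pos h0] at hb
  have := (abs_sub_le_iff.mp hb).1
  linarith [(pow_le_pow_of_le_one h0.le h1 (by norm_num : 4 ≤ 5) : t ^ 5 ≤ t ^ 4), pow_nonneg h0.le 4]

lemma poly_le_sin {t : ℝ} (h0 : 0 < t) (h1 : t ≤ 1) :
    t - t ^ 3 / 6 - t ^ 4 * (5 / 96) ≤ Real.sin t := by
  have hb := Real.sin_bound (x := t) (by rw [abs_of_pos h0]; exact h1)
  rw [abs_of_pos h0] at hb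
  have := (abs_sub_le_iff.mp hb).2
  linarith [(pow_le_pow_of_le_one h0.le h1 (by norm_num : 4 ≤ 5) : t ^ 5 ≤ t ^ 4), pow_nonneg h0.le 4]

lemma hh_pos {t : ℝ} (h0 : 0 < t) (h1 : t ≤ 1) : 0 < hh t :=
  div_pos (Real.sin_pos_of_pos_of_lt_pi h0
    (lt_of_le_of_lt h1 (by linarith [Real.pi_gt_three]))) h0

lemma hh_le {t : ℝ} (h0 : 0 < t) (h1 : t ≤ 1) :
    hh t ≤ Real.exp (-(t ^ 2 / 6) + t ^ 3 * (5 / 96)) := by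
  have key : hh t ≤ 1 + (-(t ^ 2 / 6) + t ^ 3 * (5 / 96)) := by
    rw [hh, div_le_iff₀ h0]
    nlinarith [sin_le_poly h0 h1]
  refine key.trans ?_
  linarith [Real.add_one_le_exp (-(t ^ 2 / 6) + t ^ 3 * (5 / 96))]

lemma le_hh {t : ℝ} (h0 : 0 < t) (h1 : t ≤ 1) :
    Real.exp (-(t ^ 2 / 6) - t ^ 3) ≤ hh t := by
  have hy0 : (0:ℝ) ≤ t ^ 2 / 6 + t ^ 3 := by positivity
  have h5 : (0:ℝ) < 1 + (t ^ 2 / 6 + t ^ 3) := by linarith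
  have h2 : Real.exp (-(t ^ 2 / 6) - t ^ 3) * (1 + (t ^ 2 / 6 + t ^ 3)) ≤ 1 := by
    have hle := Real.add_one_le_exp (t ^ 2 / 6 + t ^ 3)
    have := mul_le_mul_of_nonneg_left hle (Real.exp_nonneg (-(t ^ 2 / 6) - t ^ 3))
    calc Real.exp (-(t ^ 2 / 6) - t ^ 3) * (1 + (t ^ 2 / 6 + t ^ 3))
        ≤ Real.exp (-(t ^ 2 / 6) - t ^ 3) * Real.exp (t ^ 2 / 6 + t ^ 3) := by
          linarith [this]
      _ = 1 := by rw [← Real.exp_add]; norm_num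
  have h3 : (1 : ℝ) ≤ (1 - t ^ 2 / 6 - t ^ 3 * (5 / 96)) * (1 + (t ^ 2 / 6 + t ^ 3)) := by
    have hx4 : t ^ 4 ≤ t ^ 3 := pow_le_pow_of_le_one h0.le h1 (by norm_num)
    have hx5 : t ^ 5 ≤ t ^ 3 := pow_le_pow_of_le_one h0.le h1 (by norm_num)
    have hx6 : t ^ 6 ≤ t ^ 3 := pow_le_pow_of_le_one h0.le h1 (by norm_num)
    nlinarith [hx4, hx5, hx6, pow_nonneg h0.le 3]
  have h4 : Real.exp (-(t ^ 2 / 6) - t ^ 3) ≤ 1 - t ^ 2 / 6 - t ^ 3 * (5 / 96) := by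
    have := h2.trans h3
    exact le_of_mul_le_mul_right this h5
  refine h4.trans ?_
  rw [hh, le_div_iff₀ h0]
  nlinarith [poly_le_sin h0 h1]

lemma hh_le_dom {t : ℝ} (h0 : 0 < t) (h1 : t ≤ 1) :
    hh t ≤ Real.exp (-(11 / 96) * t ^ 2) := by
  refine (hh_le h0 h1).trans (Real.exp_le_exp.mpr ?_)
  nlinarith [pow_le_pow_left₀ h0.le h1 3, sq_nonneg t, mul_le_mul_of_nonneg_left h1 (sq_nonneg t)]

lemma sqrt_nat_atTop : Tendsto (fun n : ℕ => Real.sqrt n) atTop atTop := by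
  have h : Tendsto (fun x : ℝ => Real.sqrt x) atTop atTop := by
    rw [show Real.sqrt = fun x : ℝ => x ^ ((1:ℝ)/2) from funext fun x => Real.sqrt_eq_rpow x]
    exact tendsto_rpow_atTop (by norm_num)
  exact h.comp tendsto_natCast_atTop_atTop

lemma integrableOn_core (n : ℕ) :
    IntegrableOn (fun t => hh t ^ n) (Ioc (0:ℝ) 1) := by
  refine Integrable.mono' (g := fun _ => (1:ℝ))
    ((integrableOn_const_iff (by simp)).mpr (Or.inr measure_Ioc_lt_top)) ?_ ?_
  · exact ((measurable_hh.pow_const n).aestronglyMeasurable).restrict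
  · refine (ae_restrict_iff' measurableSet_Ioc).2 (Eventually.of_forall fun t ht => ?_)
    have h0 := ht.1
    have h1 := ht.2
    have hp := hh_pos h0 h1
    have hle1 : hh t ≤ 1 := by
      rw [hh, div_le_one h0]; exact (Real.sin_lt h0).le
    rw [Real.norm_eq_abs, abs_of_nonneg (pow_nonneg hp.le n)]
    exact pow_le_one₀ hp.le hle1

lemma integrableOn_tail {n : ℕ} (hn : 2 ≤ n) :
    IntegrableOn (fun t => hh t ^ n) (Ioi (1:ℝ)) := by
  refine Integrable.mono' (g := fun t => t ^ (-2 : ℝ))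
    (integrableOn_Ioi_rpow_of_lt (by norm_num) one_pos) ?_ ?_
  · exact ((measurable_hh.pow_const n).aestronglyMeasurable).restrict
  · refine (ae_restrict_iff' measurableSet_Ioi).2 (Eventually.of_forall fun t ht => ?_)
    show ‖hh t ^ n‖ ≤ t ^ (-2 : ℝ)
    have h1 : (1:ℝ) < t := ht
    have h0 : (0:ℝ) < t := lt_trans one_pos h1
    have habs : |hh t| ≤ 1 / t := by
      rw [hh, abs_div, abs_of_pos h0]
      gcongr
      exact Real.abs_sin_le_one t
    have hnn : (0:ℝ) ≤ 1 / t := by positivity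
    have hbound : |hh t| ^ n ≤ (1 / t) ^ 2 := by
      calc |hh t| ^ n ≤ (1 / t) ^ n := pow_le_pow_left₀ (abs_nonneg _) habs n
        _ ≤ (1 / t) ^ 2 := by
            apply pow_le_pow_of_le_one hnn _ hn
            rw [div_le_one h0]; exact h1.le
    rw [Real.norm_eq_abs, abs_pow]
    refine hbound.trans_eq ?_
    rw [show (-2:ℝ) = -((2:ℕ):ℝ) by norm_num, Real.rpow_neg h0.le, Real.rpow_natCast]
    rw [one_div, inv_pow]

lemma tail_bound {n : ℕ} (hn : 2 ≤ n) :
    |∫ t in Ioi (1:ℝ), hh t ^ n| ≤ 2 / n := by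
  have hcast : (2:ℝ) ≤ (n:ℝ) := by exact_mod_cast hn
  have ha : (-(n:ℝ)) < -1 := by linarith
  have hint : IntegrableOn (fun t : ℝ => t ^ (-(n:ℝ))) (Ioi (1:ℝ)) :=
    integrableOn_Ioi_rpow_of_lt ha one_pos
  have h1 : |∫ t in Ioi (1:ℝ), hh t ^ n| ≤ ∫ t in Ioi (1:ℝ), |hh t ^ n| := by
    calc |∫ t in Ioi (1:ℝ), hh t ^ n| = ‖∫ t in Ioi (1:ℝ), hh t ^ n‖ := (Real.norm_eq_abs _).symm
      _ ≤ ∫ t in Ioi (1:ℝ), ‖hh t ^ n‖ :=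
          norm_integral_le_integral_norm (μ := volume.restrict (Ioi (1:ℝ))) (fun t => hh t ^ n)
      _ = ∫ t in Ioi (1:ℝ), |hh t ^ n| := by simp only [Real.norm_eq_abs]
  have h2 : ∫ t in Ioi (1:ℝ), |hh t ^ n| ≤ ∫ t in Ioi (1:ℝ), t ^ (-(n:ℝ)) := by
    refine setIntegral_mono_on ((integrableOn_tail hn).abs) hint measurableSet_Ioi ?_
    intro t ht
    have h1t : (1:ℝ) < t := ht
    have h0 : (0:ℝ) < t := lt_trans one_pos h1t
    have habs : |hh t| ≤ 1 / t := by
      rw [hh, abs_div, abs_of_pos h0]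
      gcongr
      exact Real.abs_sin_le_one t
    calc |hh t ^ n| = |hh t| ^ n := abs_pow _ _
      _ ≤ (1 / t) ^ n := pow_le_pow_left₀ (abs_nonneg _) habs n
      _ = t ^ (-(n:ℝ)) := by
          rw [Real.rpow_neg h0.le, Real.rpow_natCast, one_div, inv_pow]
  have h3 : ∫ t in Ioi (1:ℝ), t ^ (-(n:ℝ)) = 1 / ((n:ℝ) - 1) := by
    rw [integral_Ioi_rpow_of_lt ha one_pos, Real.one_rpow,
      show -(n:ℝ) + 1 = -((n:ℝ) - 1) by ring, div_neg]
    ring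
  have h4 : (1:ℝ) / ((n:ℝ) - 1) ≤ 2 / n := by
    rw [div_le_div_iff₀ (by linarith) (by linarith)]
    linarith
  calc |∫ t in Ioi (1:ℝ), hh t ^ n| ≤ ∫ t in Ioi (1:ℝ), t ^ (-(n:ℝ)) := h1.trans h2
    _ = 1 / ((n:ℝ) - 1) := h3
    _ ≤ 2 / n := h4

lemma tail_tendsto :
    Tendsto (fun n : ℕ => Real.sqrt n * ∫ t in Ioi (1:ℝ), hh t ^ n) atTop (nhds 0) := by
  have hg : Tendsto (fun n : ℕ => 2 / Real.sqrt n) atTop (nhds 0) :=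
    tendsto_const_nhds.div_atTop sqrt_nat_atTop
  refine squeeze_zero_norm' ?_ hg
  filter_upwards [eventually_ge_atTop 2] with n hn
  have hn0 : (0:ℝ) < n := by exact_mod_cast (by omega : 0 < n)
  have hs : (0:ℝ) < Real.sqrt n := Real.sqrt_pos.mpr hn0
  have := tail_bound hn
  rw [Real.norm_eq_abs, abs_mul, abs_of_pos hs]
  calc Real.sqrt n * |∫ t in Ioi (1:ℝ), hh t ^ n| ≤ Real.sqrt n * (2 / n) := by
        exact mul_le_mul_of_nonneg_left this hs.le
    _ = 2 / Real.sqrt n := by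
        rw [eq_div_iff hs.ne']
        have : Real.sqrt n * Real.sqrt n = (n:ℝ) := Real.mul_self_sqrt hn0.le
        field_simp
        linarith [this]

noncomputable def Fn (n : ℕ) : ℝ → ℝ :=
  (Ioc (0:ℝ) (Real.sqrt n)).indicator (fun s => hh (s / Real.sqrt n) ^ n)

lemma Fn_eq {n : ℕ} (hn : 1 ≤ n) :
    ∫ s in Ioi (0:ℝ), Fn n s = Real.sqrt n * ∫ t in Ioc (0:ℝ) 1, hh t ^ n := by
  have hn0 : (0:ℝ) < n := by exact_mod_cast hn
  have hr : (0:ℝ) < Real.sqrt n := Real.sqrt_pos.mpr hn0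
  rw [Fn, setIntegral_indicator measurableSet_Ioc,
    show Ioi (0:ℝ) ∩ Ioc 0 (Real.sqrt n) = Ioc 0 (Real.sqrt n) from
      inter_eq_self_of_subset_right Ioc_subset_Ioi_self,
    ← intervalIntegral.integral_of_le hr.le,
    intervalIntegral.integral_comp_div (f := fun t => hh t ^ n) hr.ne',
    zero_div, div_self hr.ne', smul_eq_mul, intervalIntegral.integral_of_le zero_le_one]

lemma dct : Tendsto (fun n : ℕ => ∫ s in Ioi (0:ℝ), Fn n s) atTop
    (nhds (∫ s in Ioi (0:ℝ), Real.exp (-(1/6) * s ^ 2))) := by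
  refine tendsto_integral_of_dominated_convergence
    (fun s => Real.exp (-(11/96) * s ^ 2)) ?_ ?_ ?_ ?_
  · intro n
    exact (((measurable_hh.comp (measurable_id.div_const _)).pow_const n).indicator
      measurableSet_Ioc).aestronglyMeasurable.restrict
  · exact (integrable_exp_neg_mul_sq (by norm_num : (0:ℝ) < 11/96)).restrict
  · intro n
    refine Eventually.of_forall fun s => ?_
    rw [Fn]
    by_cases hmem : s ∈ Ioc (0:ℝ) (Real.sqrt n)
    · rw [indicator_of_mem hmem]
      have hn0 : (0:ℝ) < n := by
        rcases Nat.eq_zero_or_pos n with h | h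
        · exfalso; subst h
          rw [Nat.cast_zero, Real.sqrt_zero] at hmem
          exact absurd hmem.2 (not_le.mpr hmem.1)
        · exact_mod_cast h
      have hr : (0:ℝ) < Real.sqrt n := Real.sqrt_pos.mpr hn0
      have ht0 : 0 < s / Real.sqrt n := div_pos hmem.1 hr
      have ht1 : s / Real.sqrt n ≤ 1 := by
        rw [div_le_one hr]; exact hmem.2
      have hdom := hh_le_dom ht0 ht1
      have hpos := hh_pos ht0 ht1
      have hs2 : (n:ℝ) * (s / Real.sqrt n) ^ 2 = s ^ 2 := by
        rw [div_pow, Real.sq_sqrt hn0.le]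
        field_simp
      rw [Real.norm_eq_abs, abs_of_nonneg (pow_nonneg hpos.le n)]
      calc hh (s / Real.sqrt n) ^ n
          ≤ Real.exp (-(11/96) * (s / Real.sqrt n) ^ 2) ^ n :=
            pow_le_pow_left₀ hpos.le hdom n
        _ = Real.exp ((n:ℝ) * (-(11/96) * (s / Real.sqrt n) ^ 2)) :=
            (Real.exp_nat_mul _ n).symm
        _ = Real.exp (-(11/96) * s ^ 2) := by
            congr 1
            rw [show (n:ℝ) * (-(11/96) * (s / Real.sqrt n) ^ 2)
                = -(11/96) * ((n:ℝ) * (s / Real.sqrt n) ^ 2) by ring, hs2]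
    · rw [indicator_of_notMem hmem]
      simp [Real.exp_nonneg]
  · refine (ae_restrict_iff' measurableSet_Ioi).2 (Eventually.of_forall fun s hs => ?_)
    have hs0 : (0:ℝ) < s := hs
    have hev : ∀ᶠ n : ℕ in atTop, s ^ 2 ≤ (n:ℝ) ∧ 1 ≤ n := by
      filter_upwards [eventually_ge_atTop (⌈s ^ 2⌉₊ + 1)] with n hn
      constructor
      · calc s ^ 2 ≤ (⌈s ^ 2⌉₊ : ℝ) := Nat.le_ceil _
          _ ≤ (n:ℝ) := by exact_mod_cast le_of_lt (by omega)
      · omega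
    have hlow : Tendsto (fun n : ℕ => Real.exp (-(1/6) * s ^ 2 - s ^ 3 / Real.sqrt n))
        atTop (nhds (Real.exp (-(1/6) * s ^ 2))) := by
      have : Tendsto (fun n : ℕ => -(1/6) * s ^ 2 - s ^ 3 / Real.sqrt n) atTop
          (nhds (-(1/6) * s ^ 2 - 0)) :=
        tendsto_const_nhds.sub (tendsto_const_nhds.div_atTop sqrt_nat_atTop)
      rw [sub_zero] at this
      exact (Real.continuous_exp.tendsto _).comp this
    have hup : Tendsto (fun n : ℕ => Real.exp (-(1/6) * s ^ 2 + s ^ 3 * (5/96) / Real.sqrt n))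
        atTop (nhds (Real.exp (-(1/6) * s ^ 2))) := by
      have : Tendsto (fun n : ℕ => -(1/6) * s ^ 2 + s ^ 3 * (5/96) / Real.sqrt n) atTop
          (nhds (-(1/6) * s ^ 2 + 0)) :=
        tendsto_const_nhds.add (tendsto_const_nhds.div_atTop sqrt_nat_atTop)
      rw [add_zero] at this
      exact (Real.continuous_exp.tendsto _).comp this
    refine tendsto_of_tendsto_of_tendsto_of_le_of_le' hlow hup ?_ ?_
    · filter_upwards [hev] with n hn
      obtain ⟨hsq, hn1⟩ := hn
      have hn0 : (0:ℝ) < n := by exact_mod_cast hn1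
      have hr : (0:ℝ) < Real.sqrt n := Real.sqrt_pos.mpr hn0
      have hsle : s ≤ Real.sqrt n := by
        calc s = Real.sqrt (s ^ 2) := (Real.sqrt_sq hs0.le).symm
          _ ≤ Real.sqrt n := Real.sqrt_le_sqrt hsq
      have hmem : s ∈ Ioc (0:ℝ) (Real.sqrt n) := ⟨hs0, hsle⟩
      have ht0 : 0 < s / Real.sqrt n := div_pos hs0 hr
      have ht1 : s / Real.sqrt n ≤ 1 := by rw [div_le_one hr]; exact hsle
      rw [Fn, indicator_of_mem hmem]
      have hs2 : (n:ℝ) * (s / Real.sqrt n) ^ 2 = s ^ 2 := by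
        rw [div_pow, Real.sq_sqrt hn0.le]; field_simp
      have hs3 : (n:ℝ) * (s / Real.sqrt n) ^ 3 = s ^ 3 / Real.sqrt n := by
        rw [div_pow]
        rw [show Real.sqrt n ^ 3 = Real.sqrt n ^ 2 * Real.sqrt n by ring, Real.sq_sqrt hn0.le]
        field_simp
      calc Real.exp (-(1/6) * s ^ 2 - s ^ 3 / Real.sqrt n)
          = Real.exp (-((s / Real.sqrt n) ^ 2 / 6) - (s / Real.sqrt n) ^ 3) ^ n := by
            rw [← Real.exp_nat_mul]
            congr 1
            rw [show (n:ℝ) * (-((s / Real.sqrt n) ^ 2 / 6) - (s / Real.sqrt n) ^ 3)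
              = -(1/6) * ((n:ℝ) * (s / Real.sqrt n) ^ 2)
                - (n:ℝ) * (s / Real.sqrt n) ^ 3 by ring, hs2, hs3]
        _ ≤ hh (s / Real.sqrt n) ^ n :=
            pow_le_pow_left₀ (Real.exp_nonneg _) (le_hh ht0 ht1) n
    · filter_upwards [hev] with n hn
      obtain ⟨hsq, hn1⟩ := hn
      have hn0 : (0:ℝ) < n := by exact_mod_cast hn1
      have hr : (0:ℝ) < Real.sqrt n := Real.sqrt_pos.mpr hn0
      have hsle : s ≤ Real.sqrt n := by
        calc s = Real.sqrt (s ^ 2) := (Real.sqrt_sq hs0.le).symm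
          _ ≤ Real.sqrt n := Real.sqrt_le_sqrt hsq
      have hmem : s ∈ Ioc (0:ℝ) (Real.sqrt n) := ⟨hs0, hsle⟩
      have ht0 : 0 < s / Real.sqrt n := div_pos hs0 hr
      have ht1 : s / Real.sqrt n ≤ 1 := by rw [div_le_one hr]; exact hsle
      rw [Fn, indicator_of_mem hmem]
      have hs2 : (n:ℝ) * (s / Real.sqrt n) ^ 2 = s ^ 2 := by
        rw [div_pow, Real.sq_sqrt hn0.le]; field_simp
      have hs3 : (n:ℝ) * (s / Real.sqrt n) ^ 3 = s ^ 3 / Real.sqrt n := by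
        rw [div_pow]
        rw [show Real.sqrt n ^ 3 = Real.sqrt n ^ 2 * Real.sqrt n by ring, Real.sq_sqrt hn0.le]
        field_simp
      calc hh (s / Real.sqrt n) ^ n
          ≤ Real.exp (-((s / Real.sqrt n) ^ 2 / 6) + (s / Real.sqrt n) ^ 3 * (5/96)) ^ n :=
            pow_le_pow_left₀ (hh_pos ht0 ht1).le (hh_le ht0 ht1) n
        _ = Real.exp (-(1/6) * s ^ 2 + s ^ 3 * (5/96) / Real.sqrt n) := by
            rw [← Real.exp_nat_mul]
            congr 1
            rw [show (n:ℝ) * (-((s / Real.sqrt n) ^ 2 / 6) + (s / Real.sqrt n) ^ 3 * (5/96))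
              = -(1/6) * ((n:ℝ) * (s / Real.sqrt n) ^ 2)
                + ((n:ℝ) * (s / Real.sqrt n) ^ 3) * (5/96) by ring, hs2, hs3]
            ring

lemma gauss_val :
    ∫ s in Ioi (0:ℝ), Real.exp (-(1/6) * s ^ 2) = Real.sqrt (6 * Real.pi) / 2 := by
  rw [integral_gaussian_Ioi (1/6)]
  congr 2
  rw [div_div_eq_mul_div, div_one]
  ring

lemma key_tendsto :
    Tendsto (fun n : ℕ => Real.sqrt n * ∫ t in Ioi (0:ℝ), hh t ^ n) atTop
      (nhds (Real.sqrt (6 * Real.pi) / 2)) := by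
  have hmain : Tendsto (fun n : ℕ => ∫ s in Ioi (0:ℝ), Fn n s) atTop
      (nhds (Real.sqrt (6 * Real.pi) / 2)) := by
    rw [← gauss_val]; exact dct
  have hsum := hmain.add tail_tendsto
  rw [add_zero] at hsum
  refine hsum.congr' ?_
  filter_upwards [eventually_ge_atTop 2] with n hn
  have hn1 : 1 ≤ n := by omega
  have hsplit : ∫ t in Ioi (0:ℝ), hh t ^ n
      = (∫ t in Ioc (0:ℝ) 1, hh t ^ n) + ∫ t in Ioi (1:ℝ), hh t ^ n := by
    rw [← setIntegral_union (Ioc_disjoint_Ioi le_rfl) measurableSet_Ioi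
      (integrableOn_core n) (integrableOn_tail hn), Ioc_union_Ioi_eq_Ioi zero_le_one]
  rw [hsplit, Fn_eq hn1]
  ring

end SigmaAsymp

theorem sigma_bound_asymptotics :
    Filter.Tendsto
      (fun n : ℕ => sigma n * 2 ^ (n - 1) * Real.sqrt (2 * Real.pi * n / 3) / 2 ^ n)
      Filter.atTop (nhds 1) := by
  have hpi := Real.pi_pos
  have key := SigmaAsymp.key_tendsto.mul_const (Real.sqrt (2 * Real.pi / 3) / Real.pi)
  have hval : Real.sqrt (6 * Real.pi) / 2 * (Real.sqrt (2 * Real.pi / 3) / Real.pi) = 1 := by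
    rw [div_mul_div_comm, ← Real.sqrt_mul (by positivity)]
    rw [show 6 * Real.pi * (2 * Real.pi / 3) = (2 * Real.pi) ^ 2 by ring,
      Real.sqrt_sq (by positivity)]
    field_simp
  rw [hval] at key
  refine key.congr' ?_
  filter_upwards [Filter.eventually_ge_atTop 1] with n hn
  have h2 : (2:ℝ) ^ n = 2 ^ (n - 1) * 2 := by
    rw [← pow_succ, Nat.sub_add_cancel hn]
  have h3 : Real.sqrt (2 * Real.pi * n / 3) = Real.sqrt n * Real.sqrt (2 * Real.pi / 3) := by
    rw [← Real.sqrt_mul (Nat.cast_nonneg n)]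
    congr 1
    ring
  show Real.sqrt n * (∫ t in Set.Ioi (0:ℝ), SigmaAsymp.hh t ^ n)
      * (Real.sqrt (2 * Real.pi / 3) / Real.pi)
    = sigma n * 2 ^ (n - 1) * Real.sqrt (2 * Real.pi * n / 3) / 2 ^ n
  rw [sigma, h2, h3]
  have hhq : (fun t : ℝ => SigmaAsymp.hh t ^ n) = fun t => (Real.sin t / t) ^ n := rfl
  rw [hhq]
  have hp : (0:ℝ) < 2 ^ (n - 1) := by positivity
  field_simp
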